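/- For every α ∈ F, N_α² = q² · I_{(q+2)q²} + q · J_{(q+2)q²} and N_α · J_{(q+2)q²} = (q²+q) · J_{(q+2)q²}; thus N_α is the symmetric incidence matrix of a symmetric 2-((q+2)q², q²+q, q) design. -/

import Mathlib

open Matrix Kronecker

/-- The `q × q` permutation matrix `φ(α)` with `(x,y)`-entry `1` iff `y = x + α`. -/
noncomputable def phi {F : Type*} [Add F] [DecidableEq F] (α : F) : Matrix F F ℝ :=
  Matrix.of fun x y => if y = x + α then (1 : ℝ) else 0

/-- The all-ones matrix. -/
noncomputable def Jmat (n : Type*) : Matrix n n ℝ :=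
  Matrix.of fun _ _ => (1 : ℝ)

/-- The auxiliary matrix `C_{a,α'}` with `((β,x),(β',y))`-entry `1` iff
`y = x + a(β+β') + α'`. -/
noncomputable def Cmat {F : Type*} [Field F] [DecidableEq F] (a α' : F) :
    Matrix (F × F) (F × F) ℝ :=
  Matrix.of fun p p' => if p'.2 = p.2 + a * (p.1 + p'.1) + α' then (1 : ℝ) else 0

/-- Embedding of `F ∪ {y}` into `S = F ∪ {x, y}`, coded as `Option F → F ⊕ Bool`
(`none ↦ y = Sum.inr true`; the symbol `x` is `Sum.inr false`). -/
def emb {F : Type*} : Option F → F ⊕ Bool :=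
  fun o => o.elim (Sum.inr true) Sum.inl

/-- `C_{a,α}` for `a ∈ F ∪ {y}`, where `C_{y,α} = φ(α) ⊗ J_q`. -/
noncomputable def CmatE {F : Type*} [Field F] [DecidableEq F] (a : Option F) (α : F) :
    Matrix (F × F) (F × F) ℝ :=
  a.elim (phi α ⊗ₖ Jmat F) (fun b => Cmat b α)

/-- `N_α = Σ_{a ∈ F ∪ {y}} P_a ⊗ C_{a,α}`. -/
noncomputable def Nmat {F : Type*} [Field F] [Fintype F] [DecidableEq F]
    (P : F ⊕ Bool → Matrix (F ⊕ Bool) (F ⊕ Bool) ℝ) (α : F) :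
    Matrix ((F ⊕ Bool) × F × F) ((F ⊕ Bool) × F × F) ℝ :=
  ∑ a : Option F, P (emb a) ⊗ₖ CmatE a α

set_option linter.unusedSectionVars false

section auxGeneral

/-- Kronecker product of a sum on the left. -/
lemma sum_kron_left {ι n m : Type*} [Fintype ι] (A : ι → Matrix n n ℝ) (B : Matrix m m ℝ) :
    (∑ i : ι, A i) ⊗ₖ B = ∑ i : ι, (A i) ⊗ₖ B := by
  ext ⟨i, j⟩ ⟨k, l⟩
  simp [Matrix.sum_apply, Finset.sum_mul]

/-- Kronecker product of a sum on the right. -/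
lemma sum_kron_right {ι n m : Type*} [Fintype ι] (A : Matrix n n ℝ) (B : ι → Matrix m m ℝ) :
    A ⊗ₖ (∑ i : ι, B i) = ∑ i : ι, A ⊗ₖ (B i) := by
  ext ⟨i, j⟩ ⟨k, l⟩
  simp [Matrix.sum_apply, Finset.mul_sum]

lemma sub_kron {n m : Type*} (A A' : Matrix n n ℝ) (B : Matrix m m ℝ) :
    (A - A') ⊗ₖ B = A ⊗ₖ B - A' ⊗ₖ B := by
  ext ⟨i, j⟩ ⟨k, l⟩
  simp [sub_mul]

lemma kron_sub {n m : Type*} (A : Matrix n n ℝ) (B B' : Matrix m m ℝ) :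
    A ⊗ₖ (B - B') = A ⊗ₖ B - A ⊗ₖ B' := by
  ext ⟨i, j⟩ ⟨k, l⟩
  simp [mul_sub]

lemma smul_kron {n m : Type*} (r : ℝ) (A : Matrix n n ℝ) (B : Matrix m m ℝ) :
    (r • A) ⊗ₖ B = r • (A ⊗ₖ B) := by
  ext ⟨i, j⟩ ⟨k, l⟩
  simp [mul_assoc]

lemma kron_smul {n m : Type*} (r : ℝ) (A : Matrix n n ℝ) (B : Matrix m m ℝ) :
    A ⊗ₖ (r • B) = r • (A ⊗ₖ B) := by
  ext ⟨i, j⟩ ⟨k, l⟩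
  simp; ring

lemma Jmat_mul_Jmat (n : Type*) [Fintype n] :
    Jmat n * Jmat n = (Fintype.card n : ℝ) • Jmat n := by
  ext i j
  simp [Jmat, Matrix.mul_apply]

lemma Jmat_kron (a b : Type*) : (Jmat a) ⊗ₖ (Jmat b) = Jmat (a × b) := by
  ext ⟨i, j⟩ ⟨k, l⟩
  simp [Jmat]

lemma Jmat_transpose (n : Type*) : (Jmat n)ᵀ = Jmat n := rfl

end auxGeneral

section auxField
variable {F : Type*} [Field F] [Fintype F] [DecidableEq F]

lemma swap2 [CharP F 2] (x y c : F) : x = y + c ↔ y = x + c := by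
  constructor <;> rintro rfl <;> rw [add_assoc, CharTwo.add_self_eq_zero, add_zero]

lemma sum_indicator_affine (c : F) (hc : c ≠ 0) (d z : F) :
    (∑ t : F, if z = d + c * t then (1:ℝ) else 0) = 1 := by
  have h : ∀ t : F, (z = d + c * t) ↔ (t = c⁻¹ * (z - d)) := by
    intro t
    constructor
    · intro h; rw [h]; field_simp; ring
    · intro h; rw [h]; field_simp; ring
  simp [h]

lemma sum_indicator_shift [CharP F 2] (z c : F) :
    (∑ y : F, if z = y + c then (1:ℝ) else 0) = 1 := by
  simp only [swap2 z]
  simp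

lemma phi_mul (α α' : F) : phi α * phi α' = phi (α + α') := by
  ext x y
  simp only [phi, Matrix.mul_apply, Matrix.of_apply, ite_mul, one_mul, zero_mul,
    Finset.sum_ite_eq', Finset.mem_univ, if_true]
  simp [add_assoc]

lemma phi_zero : phi (0:F) = 1 := by
  ext x y
  simp [phi, Matrix.one_apply, eq_comm]

lemma phi_transpose [CharP F 2] (α : F) : (phi α)ᵀ = phi α := by
  ext x y
  simp only [Matrix.transpose_apply, phi, Matrix.of_apply]
  simp only [swap2 x y α]

lemma phi_mul_Jmat (α : F) : phi α * Jmat F = Jmat F := by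
  ext x y
  simp [phi, Jmat, Matrix.mul_apply, ite_mul, one_mul, zero_mul]

lemma Cmat_mul_same [CharP F 2] (a α : F) :
    Cmat a α * Cmat a α = (Fintype.card F : ℝ) • Cmat a 0 := by
  ext ⟨β, x⟩ ⟨β'', z⟩
  rw [Matrix.mul_apply, Fintype.sum_prod_type]
  simp only [Cmat, Matrix.of_apply, ite_mul, one_mul, zero_mul, Finset.sum_ite_eq',
    Finset.mem_univ, if_true]
  have key : ∀ β' : F, (x + a * (β + β') + α) + a * (β' + β'') + α
      = x + a * (β + β'') + 0 := by
    intro β'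
    linear_combination (α + a * β') * (CharTwo.two_eq_zero (R := F))
  simp only [key]
  rw [Finset.sum_const]
  simp [Matrix.smul_apply]

lemma Cmat_mul_ne [CharP F 2] (a b α : F) (hab : a ≠ b) :
    Cmat a α * Cmat b α = Jmat (F × F) := by
  have hc : a + b ≠ 0 := fun h => hab (by
    rw [← CharTwo.neg_eq (R := F) b]; exact eq_neg_of_add_eq_zero_left h)
  ext ⟨β, x⟩ ⟨β'', z⟩
  rw [Matrix.mul_apply, Fintype.sum_prod_type]
  simp only [Cmat, Matrix.of_apply, ite_mul, one_mul, zero_mul, Finset.sum_ite_eq',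
    Finset.mem_univ, if_true]
  have key : ∀ β' : F, (x + a * (β + β') + α) + b * (β' + β'') + α
      = (x + a * β + b * β'') + (a + b) * β' := by
    intro β'
    linear_combination α * (CharTwo.two_eq_zero (R := F))
  simp only [key]
  rw [sum_indicator_affine (a+b) hc _ z]
  rfl

lemma sum_Cmat_zero [CharP F 2] :
    ∑ b : F, Cmat b (0:F) =
      Jmat (F × F) + (Fintype.card F : ℝ) • (1 : Matrix (F × F) (F × F) ℝ)
        - (1 : Matrix F F ℝ) ⊗ₖ Jmat F := by
  ext ⟨β, x⟩ ⟨β'', z⟩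
  simp only [Matrix.sum_apply, Cmat, Matrix.of_apply, Matrix.add_apply, Matrix.sub_apply,
    Matrix.smul_apply, Jmat, Matrix.kroneckerMap_apply, Matrix.one_apply, smul_eq_mul, mul_one]
  by_cases hβ : β = β''
  · subst hβ
    have h0 : β + β = 0 := CharTwo.add_self_eq_zero β
    simp only [h0, mul_zero, add_zero, zero_add]
    rw [Finset.sum_const]
    simp [Prod.ext_iff, eq_comm]
  · have hne : β + β'' ≠ 0 := by
      intro h
      exact hβ (by rw [← CharTwo.neg_eq (R := F) β'']; exact eq_neg_of_add_eq_zero_left h)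
    have key : ∀ b : F, x + b * (β + β'') + 0 = x + (β + β'') * b := by
      intro b; ring
    simp only [key]
    rw [sum_indicator_affine (β + β'') hne x z]
    have h1 : ((β, x) : F × F) ≠ (β'', z) := by simp [hβ]
    simp [h1, Prod.ext_iff, hβ]

lemma Cmat_transpose [CharP F 2] (a α : F) : (Cmat a α)ᵀ = Cmat a α := by
  ext ⟨β, x⟩ ⟨β', y⟩
  simp only [Matrix.transpose_apply, Cmat, Matrix.of_apply]
  have h : (x = y + a * (β' + β) + α) ↔ (y = x + a * (β + β') + α) := by
    rw [add_assoc, add_assoc, swap2, add_comm β' β]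
  simp only [h]

lemma CmatE_transpose [CharP F 2] (a : Option F) (α : F) : (CmatE a α)ᵀ = CmatE a α := by
  cases a with
  | none =>
      show ((phi α ⊗ₖ Jmat F))ᵀ = phi α ⊗ₖ Jmat F
      rw [← Matrix.kroneckerMap_transpose, phi_transpose, Jmat_transpose]
  | some b => exact Cmat_transpose b α

lemma CmatE_mul_none_none [CharP F 2] (α : F) :
    CmatE (F := F) none α * CmatE none α
      = (Fintype.card F : ℝ) • ((1 : Matrix F F ℝ) ⊗ₖ Jmat F) := by
  show (phi α ⊗ₖ Jmat F) * (phi α ⊗ₖ Jmat F) = _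
  rw [← Matrix.mul_kronecker_mul, phi_mul, Jmat_mul_Jmat, CharTwo.add_self_eq_zero,
    phi_zero, kron_smul]

lemma CmatE_mul_none_some [CharP F 2] (b α : F) :
    CmatE (F := F) none α * CmatE (some b) α = Jmat (F × F) := by
  show (phi α ⊗ₖ Jmat F) * Cmat b α = Jmat (F × F)
  ext ⟨β, x⟩ ⟨β'', z⟩
  rw [Matrix.mul_apply, Fintype.sum_prod_type]
  simp only [Matrix.kroneckerMap_apply, phi, Jmat, Cmat, Matrix.of_apply, mul_one, one_mul,
    ite_mul, zero_mul]
  rw [Finset.sum_comm]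
  simp only [Finset.sum_ite_eq', Finset.mem_univ, if_true]
  simp only [add_assoc]
  exact sum_indicator_shift z _

lemma CmatE_mul_some_none [CharP F 2] (b α : F) :
    CmatE (F := F) (some b) α * CmatE none α = Jmat (F × F) := by
  show Cmat b α * (phi α ⊗ₖ Jmat F) = Jmat (F × F)
  ext ⟨β, x⟩ ⟨β'', z⟩
  rw [Matrix.mul_apply, Fintype.sum_prod_type]
  simp only [Matrix.kroneckerMap_apply, phi, Jmat, Cmat, Matrix.of_apply, mul_one, one_mul,
    ite_mul, mul_ite, mul_zero, zero_mul]
  have h : ∀ β' : F, (∑ y : F, if β'' = β' + α then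
      if y = x + b * (β + β') + α then (1:ℝ) else 0 else 0)
      = (if β'' = β' + α then 1 else 0) := by
    intro β'
    split_ifs with h
    · simp
    · simp
  simp only [h]
  exact sum_indicator_shift β'' α

lemma CmatE_mul_of_ne [CharP F 2] {a b : Option F} (α : F) (h : a ≠ b) :
    CmatE a α * CmatE b α = Jmat (F × F) := by
  match a, b with
  | none, none => exact absurd rfl h
  | none, some b' => exact CmatE_mul_none_some b' α
  | some a', none => exact CmatE_mul_some_none a' α
  | some a', some b' => exact Cmat_mul_ne a' b' α (by simpa using h)

lemma Cmat_mul_Jmat (b α : F) :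
    Cmat b α * Jmat (F × F) = (Fintype.card F : ℝ) • Jmat (F × F) := by
  ext ⟨β, x⟩ ⟨β'', z⟩
  rw [Matrix.mul_apply, Fintype.sum_prod_type]
  simp only [Cmat, Jmat, Matrix.of_apply, mul_one, ite_mul, one_mul, zero_mul]
  simp [Finset.sum_ite_eq', Matrix.smul_apply]

lemma CmatE_mul_Jmat (a : Option F) (α : F) :
    CmatE a α * Jmat (F × F) = (Fintype.card F : ℝ) • Jmat (F × F) := by
  cases a with
  | none =>
      show (phi α ⊗ₖ Jmat F) * Jmat (F × F) = _
      rw [← Jmat_kron F F, ← Matrix.mul_kronecker_mul, phi_mul_Jmat, Jmat_mul_Jmat, kron_smul,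
        Jmat_kron]
  | some b => exact Cmat_mul_Jmat b α

end auxField

/-- `N_α² = q²·I + q·J` and `N_α·J = (q²+q)·J`; thus `N_α` is the symmetric
(0,1) incidence matrix of a symmetric `2-((q+2)q², q²+q, q)` design. -/
theorem stmt7 {F : Type*} [Field F] [Fintype F] [DecidableEq F]
    (m : ℕ) (hm : 1 ≤ m) (hF : Fintype.card F = 2 ^ m)
    (P : F ⊕ Bool → Matrix (F ⊕ Bool) (F ⊕ Bool) ℝ)
    (hPsymm : ∀ a, (P a)ᵀ = P a)
    (hP01 : ∀ a i j, P a i j = 0 ∨ P a i j = 1)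
    (hPperm : ∀ a, P a * (P a)ᵀ = 1)
    (hPx : P (Sum.inr false) = 1)
    (hPsum : ∑ a : F ⊕ Bool, P a = Jmat (F ⊕ Bool)) (α : F) :
    Nmat P α * Nmat P α =
        ((2 ^ m : ℝ)) ^ 2 • (1 : Matrix ((F ⊕ Bool) × F × F) ((F ⊕ Bool) × F × F) ℝ) +
          (2 ^ m : ℝ) • Jmat ((F ⊕ Bool) × F × F) ∧
      Nmat P α * Jmat ((F ⊕ Bool) × F × F) =
        (((2 ^ m : ℝ)) ^ 2 + 2 ^ m) • Jmat ((F ⊕ Bool) × F × F) ∧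
      (Nmat P α)ᵀ = Nmat P α ∧
      (∀ v w, Nmat P α v w = 0 ∨ Nmat P α v w = 1) := by
  classical
  -- characteristic 2
  haveI hchar : CharP F 2 := by
    obtain ⟨p, hp⟩ := CharP.exists F
    haveI := hp
    obtain ⟨n, hprime, hcard⟩ := FiniteField.card F p
    have hdvd : p ∣ 2 ^ m := by
      rw [← hF, hcard]
      exact dvd_pow_self p n.2.ne'
    have hp2 : p = 2 :=
      (Nat.prime_dvd_prime_iff_eq hprime Nat.prime_two).mp (hprime.dvd_of_dvd_pow hdvd)
    rwa [hp2] at hp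
  have hq : (Fintype.card F : ℝ) = (2:ℝ) ^ m := by rw [hF]; push_cast; ring
  set q : ℝ := (2:ℝ) ^ m with hqdef
  -- row sums of permutation matrices
  have hProwsum : ∀ a i, (∑ k, P a i k) = 1 := by
    intro a i
    have h : (P a * (P a)ᵀ) i i = (1 : Matrix (F ⊕ Bool) (F ⊕ Bool) ℝ) i i := by
      rw [hPperm a]
    rw [Matrix.mul_apply] at h
    simp only [Matrix.transpose_apply, Matrix.one_apply_eq] at h
    calc (∑ k, P a i k) = ∑ k, P a i k * P a i k := by
          refine Finset.sum_congr rfl fun k _ => ?_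
          rcases hP01 a i k with h0 | h1
          · rw [h0]; ring
          · rw [h1]; ring
      _ = 1 := h
  have hProw : ∀ a, P a * Jmat (F ⊕ Bool) = Jmat (F ⊕ Bool) := by
    intro a
    ext i j
    rw [Matrix.mul_apply]
    simp only [Jmat, Matrix.of_apply, mul_one]
    exact hProwsum a i
  -- sum over Option F of the P's
  have hsumOpt : (∑ a : Option F, P (emb a)) = Jmat (F ⊕ Bool) - 1 := by
    have h2 : (∑ f : F, P (Sum.inl f)) + (P (Sum.inr true) + P (Sum.inr false))
        = Jmat (F ⊕ Bool) := by
      rw [← Fintype.sum_bool (fun b => P (Sum.inr b)), ← Fintype.sum_sum_type]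
      exact hPsum
    rw [Fintype.sum_option]
    show P (Sum.inr true) + (∑ f : F, P (Sum.inl f)) = Jmat (F ⊕ Bool) - 1
    rw [hPx] at h2
    rw [← h2]
    abel
  have hPP : ∀ a : Option F, P (emb a) * P (emb a) = 1 := by
    intro a
    rw [← hPsymm (emb a)]
    nth_rewrite 1 [hPsymm (emb a)]
    exact hPperm (emb a)
  refine ⟨?_, ?_, ?_, ?_⟩
  · -- N * N
    rw [Nmat, Finset.sum_mul_sum]
    simp only [← Matrix.mul_kronecker_mul]
    have hsplitsum : ∀ a : Option F,
        (∑ b : Option F, (P (emb a) * P (emb b)) ⊗ₖ (CmatE a α * CmatE b α))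
          = ((1 : Matrix (F ⊕ Bool) (F ⊕ Bool) ℝ) ⊗ₖ (CmatE a α * CmatE a α)
              - (1 : Matrix (F ⊕ Bool) (F ⊕ Bool) ℝ) ⊗ₖ Jmat (F × F))
            + ∑ b : Option F, (P (emb a) * P (emb b)) ⊗ₖ Jmat (F × F) := by
      intro a
      rw [← Finset.add_sum_erase _ _ (Finset.mem_univ a),
          ← Finset.add_sum_erase _
            (fun b => (P (emb a) * P (emb b)) ⊗ₖ Jmat (F × F)) (Finset.mem_univ a)]
      have herase :
          (∑ b ∈ Finset.univ.erase a, (P (emb a) * P (emb b)) ⊗ₖ (CmatE a α * CmatE b α))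
            = ∑ b ∈ Finset.univ.erase a, (P (emb a) * P (emb b)) ⊗ₖ Jmat (F × F) := by
        refine Finset.sum_congr rfl fun b hb => ?_
        have hne : a ≠ b := fun h => ((Finset.mem_erase.mp hb).1 h.symm)
        rw [CmatE_mul_of_ne α hne]
      rw [herase, hPP a]
      abel
    simp only [hsplitsum]
    rw [Finset.sum_add_distrib]
    -- the off-diagonal part
    have hB : (∑ a : Option F, ∑ b : Option F, (P (emb a) * P (emb b)) ⊗ₖ Jmat (F × F))
        = ((Jmat (F ⊕ Bool) - 1) * (Jmat (F ⊕ Bool) - 1)) ⊗ₖ Jmat (F × F) := by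
      have h1 : (∑ a : Option F, P (emb a)) * (∑ b : Option F, P (emb b))
          = ∑ a : Option F, ∑ b : Option F, P (emb a) * P (emb b) :=
        Finset.sum_mul_sum _ _ _ _
      rw [hsumOpt] at h1
      rw [h1, sum_kron_left]
      exact Finset.sum_congr rfl fun a _ => (sum_kron_left _ _).symm
    have hcard2 : (Fintype.card (F ⊕ Bool) : ℝ) = q + 2 := by
      rw [Fintype.card_sum, Fintype.card_bool, hF, hqdef]
      push_cast
      ring
    have hJJ : (Jmat (F ⊕ Bool) - 1) * (Jmat (F ⊕ Bool) - 1)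
        = q • Jmat (F ⊕ Bool) + 1 := by
      rw [sub_mul, mul_sub, mul_sub, Jmat_mul_Jmat, one_mul, mul_one, mul_one, hcard2]
      module
    rw [hB, hJJ]
    -- the diagonal part
    rw [Finset.sum_sub_distrib, ← sum_kron_right]
    have hCC : (∑ a : Option F, CmatE a α * CmatE a α)
        = q • Jmat (F × F) + (q ^ 2) • (1 : Matrix (F × F) (F × F) ℝ) := by
      rw [Fintype.sum_option, CmatE_mul_none_none]
      have hsome : ∀ b : F, CmatE (some b) α * CmatE (some b) α
          = (Fintype.card F : ℝ) • Cmat b 0 := fun b => Cmat_mul_same b α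
      simp only [hsome]
      rw [← Finset.smul_sum, sum_Cmat_zero, hq]
      module
    rw [hCC, Matrix.kronecker_add, kron_smul, kron_smul, Matrix.one_kronecker_one]
    rw [Finset.sum_const, Finset.card_univ, Fintype.card_option,
      ← Nat.cast_smul_eq_nsmul ℝ]
    have hcard1 : ((Fintype.card F + 1 : ℕ) : ℝ) = q + 1 := by
      rw [hF]; push_cast; ring
    rw [hcard1, Matrix.add_kronecker, smul_kron, Jmat_kron]
    module
  · -- N * J
    have hJ : Jmat ((F ⊕ Bool) × F × F) = Jmat (F ⊕ Bool) ⊗ₖ Jmat (F × F) :=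
      (Jmat_kron _ _).symm
    rw [Nmat, hJ, Finset.sum_mul]
    have hterm : ∀ a : Option F, (P (emb a) ⊗ₖ CmatE a α) * (Jmat (F ⊕ Bool) ⊗ₖ Jmat (F × F))
        = q • (Jmat (F ⊕ Bool) ⊗ₖ Jmat (F × F)) := by
      intro a
      rw [← Matrix.mul_kronecker_mul, hProw, CmatE_mul_Jmat, hq, kron_smul]
    simp only [hterm]
    rw [Finset.sum_const, Finset.card_univ, Fintype.card_option]
    rw [← Nat.cast_smul_eq_nsmul ℝ, smul_smul]
    congr 1
    rw [hF]
    push_cast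
    ring
  · -- symmetry
    rw [Nmat, Matrix.transpose_sum]
    refine Finset.sum_congr rfl fun a _ => ?_
    rw [← Matrix.kroneckerMap_transpose, hPsymm, CmatE_transpose]
  · -- 0/1 entries
    intro v w
    obtain ⟨i, p⟩ := v
    obtain ⟨j, p'⟩ := w
    have hNapp : Nmat P α (i, p) (j, p')
        = ∑ a : Option F, P (emb a) i j * CmatE a α p p' := by
      rw [Nmat, Matrix.sum_apply]
      rfl
    have hsum1 : (∑ s : F ⊕ Bool, P s i j) = 1 := by
      have h : (∑ s : F ⊕ Bool, P s) i j = Jmat (F ⊕ Bool) i j := by rw [hPsum]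
      rw [Matrix.sum_apply] at h
      exact h
    obtain ⟨s₀, hs₀⟩ : ∃ s₀, P s₀ i j = 1 := by
      by_contra h
      push_neg at h
      have hz : ∀ s, P s i j = 0 := fun s => (hP01 s i j).resolve_right (h s)
      rw [Finset.sum_eq_zero (fun s _ => hz s)] at hsum1
      norm_num at hsum1
    have hzero : ∀ s, s ≠ s₀ → P s i j = 0 := by
      intro s hs
      have h3 := Finset.add_sum_erase Finset.univ (fun s' => P s' i j) (Finset.mem_univ s₀)
      simp only [hsum1, hs₀] at h3
      have hsplit : (∑ s' ∈ Finset.univ.erase s₀, P s' i j) = 0 := by linarith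
      have hnonneg : ∀ s' ∈ Finset.univ.erase s₀, (0:ℝ) ≤ P s' i j := by
        intro s' _
        rcases hP01 s' i j with h | h <;> rw [h] <;> norm_num
      exact (Finset.sum_eq_zero_iff_of_nonneg hnonneg).mp hsplit s
        (Finset.mem_erase.mpr ⟨hs, Finset.mem_univ s⟩)
    have hPite : ∀ s, P s i j = if s = s₀ then 1 else 0 := by
      intro s
      by_cases h : s = s₀
      · subst h; simp [hs₀]
      · simp [h, hzero s h]
    have hC01 : ∀ a : Option F, CmatE a α p p' = 0 ∨ CmatE a α p p' = 1 := by
      intro a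
      cases a with
      | none =>
          show (phi α ⊗ₖ Jmat F) p p' = 0 ∨ (phi α ⊗ₖ Jmat F) p p' = 1
          simp only [Matrix.kroneckerMap_apply, phi, Jmat, Matrix.of_apply, mul_one]
          split_ifs <;> simp
      | some b =>
          show Cmat b α p p' = 0 ∨ Cmat b α p p' = 1
          simp only [Cmat, Matrix.of_apply]
          split_ifs <;> simp
    rw [hNapp]
    simp only [hPite, ite_mul, one_mul, zero_mul]
    cases s₀ with
    | inl f =>
        have hembeq : ∀ a : Option F, (emb a = Sum.inl f) ↔ a = some f := by
          intro a; cases a <;> simp [emb]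
        simp only [hembeq]
        rw [Finset.sum_ite_eq']
        simp only [Finset.mem_univ, if_true]
        exact hC01 (some f)
    | inr b =>
        cases b with
        | false =>
            left
            apply Finset.sum_eq_zero
            intro a _
            have hne : emb a ≠ Sum.inr false := by cases a <;> simp [emb]
            simp [hne]
        | true =>
            have hembeq : ∀ a : Option F, (emb a = Sum.inr true) ↔ a = none := by
              intro a; cases a <;> simp [emb]
            simp only [hembeq]
            rw [Finset.sum_ite_eq']
            simp only [Finset.mem_univ, if_true]
            exact hC01 none
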